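/- The kernel D of the natural surjection ℤ/dℤ * ℤ → ℤ/dℤ × ℤ (the Cartesian subgroup of the free product ⟨a,t | a^d = 1⟩) is a free group, freely generated by the commutators [t^k, a^s] for k ∈ ℤ \ {0} and 1 ≤ s ≤ d-1. -/

import Mathlib

/-- The defining relation of the Baumslag-Solitar group `BS(m,n)`:
`t⁻¹ * a^m * t * a^(-n)`. -/
def BSrels (m n : ℤ) : Set (FreeGroup (Fin 2)) :=
  {(FreeGroup.of 1)⁻¹ * (FreeGroup.of 0) ^ m * (FreeGroup.of 1) * ((FreeGroup.of 0) ^ n)⁻¹}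

/-- The Baumslag-Solitar group `BS(m,n) = ⟨a, t ∣ t⁻¹ aᵐ t = aⁿ⟩`. -/
abbrev BS (m n : ℤ) : Type := PresentedGroup (BSrels m n)

/-- The generator `a` of `BS(m,n)`. -/
def bsa (m n : ℤ) : BS m n := PresentedGroup.of 0

/-- The generator `t` of `BS(m,n)`. -/
def bst (m n : ℤ) : BS m n := PresentedGroup.of 1

/-- The relation \`a^d = 1\` defining the free product \`ℤ/dℤ * ℤ = ⟨a, t ∣ a^d⟩\`. -/
def FPrels (d : ℤ) : Set (FreeGroup (Fin 2)) := {(FreeGroup.of 0) ^ d}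

/-- The free product \`ℤ/dℤ * ℤ\`, presented as \`⟨a, t ∣ a^d = 1⟩\`. -/
abbrev FP (d : ℤ) : Type := PresentedGroup (FPrels d)

/-- The generator \`a\` (of order \`d\`) of \`ℤ/dℤ * ℤ\`. -/
def fpa (d : ℤ) : FP d := PresentedGroup.of 0

/-- The generator \`t\` (of infinite order) of \`ℤ/dℤ * ℤ\`. -/
def fpt (d : ℤ) : FP d := PresentedGroup.of 1

namespace CF
open Multiplicative FreeGroup SemidirectProduct

variable (d : ℕ)

abbrev Idx := {s : ℤ // 1 ≤ s ∧ s ≤ (d : ℤ) - 1}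
abbrev Gen := {k : ℤ // k ≠ 0} × Idx d

lemma fpa_pow : fpa d ^ (d : ℤ) = 1 := by
  have h : (PresentedGroup.mk (FPrels d)) (FreeGroup.of 0 ^ (d : ℤ)) = 1 := by
    apply (QuotientGroup.eq_one_iff _).mpr
    exact Subgroup.subset_normalClosure rfl
  rw [show fpa (d:ℤ) = PresentedGroup.mk (FPrels d) (FreeGroup.of 0) from rfl, ← map_zpow]
  exact h

def aHom : Multiplicative (ZMod d) →* FP d :=
  AddMonoidHom.toMultiplicativeLeft (ZMod.lift d
    ⟨MonoidHom.toAdditiveRight ((zpowersHom (FP d)) (fpa d)), by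
      show Additive.ofMul (fpa d ^ ((d : ℤ))) = 0
      rw [fpa_pow]; rfl⟩)

lemma aHom_intCast (m : ℤ) : aHom d (ofAdd ((m : ZMod d))) = fpa d ^ m := by
  simp [aHom, ZMod.lift_coe]

lemma aHom_one : aHom d (ofAdd (1 : ZMod d)) = fpa d := by
  simpa using aHom_intCast d 1

lemma zmodHom_ext {G' : Type*} [Group G'] {f g : Multiplicative (ZMod d) →* G'}
    (h : f (ofAdd 1) = g (ofAdd 1)) : f = g := by
  apply MonoidHom.ext
  intro x
  obtain ⟨m, hm⟩ := ZMod.intCast_surjective (n := d) x.toAdd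
  have hx : x = (ofAdd (1 : ZMod d)) ^ m := by
    rw [← ofAdd_zsmul]
    rw [show m • (1 : ZMod d) = ((m : ZMod d)) by simp [zsmul_eq_mul], hm]
    rfl
  rw [hx, map_zpow, map_zpow, h]

def shiftA : Multiplicative (ZMod d) →* MulAut (FreeGroup (ZMod d)) :=
  MonoidHom.mk' (fun g => freeGroupCongr (Equiv.addLeft g.toAdd)) (fun g h => by
    apply MulEquiv.toMonoidHom_injective
    apply FreeGroup.ext_hom
    intro j
    simp [add_assoc])

abbrev Gd := FreeGroup (ZMod d) ⋊[shiftA d] Multiplicative (ZMod d)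

lemma shiftA_of (g : Multiplicative (ZMod d)) (j : ZMod d) :
    (shiftA d g) (FreeGroup.of j) = FreeGroup.of (g.toAdd + j) := by
  simp [shiftA]

def conjGen : FreeGroup (ZMod d) →* FP d :=
  FreeGroup.lift fun j => aHom d (ofAdd j) * fpt d * (aHom d (ofAdd j))⁻¹

def toFP : Gd d →* FP d :=
  SemidirectProduct.lift (conjGen d) (aHom d) (by
    intro g
    apply FreeGroup.ext_hom
    intro j
    simp only [MonoidHom.comp_apply, MulEquiv.coe_toMonoidHom, shiftA_of, conjGen,
      FreeGroup.lift_apply_of, MulAut.conj_apply, ofAdd_add, ofAdd_toAdd]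
    rw [_root_.map_mul (aHom d)]
    group)

def PhiF : FP d →* Gd d :=
  PresentedGroup.toGroup (f := fun i : Fin 2 => if i = 0 then inr (ofAdd 1) else inl (.of 0)) (by
    intro r hr
    rw [Set.mem_singleton_iff.mp hr, map_zpow]
    have h1 : (FreeGroup.lift fun i : Fin 2 => if i = 0 then (inr (ofAdd 1) : Gd d) else inl (.of 0))
        (FreeGroup.of 0) = inr (ofAdd (1 : ZMod d)) := by simp
    rw [h1, ← map_zpow inr, ← ofAdd_zsmul,
      show (d:ℤ) • (1 : ZMod d) = ((d:ℤ) : ZMod d) by simp [zsmul_eq_mul]]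
    simp)

lemma PhiF_fpa : PhiF d (fpa d) = inr (ofAdd 1) := by
  simp [PhiF, fpa, PresentedGroup.toGroup.of]

lemma PhiF_fpt : PhiF d (fpt d) = inl (.of 0) := by
  simp [PhiF, fpt, PresentedGroup.toGroup.of]

lemma toFP_comp_PhiF : (toFP d).comp (PhiF d) = MonoidHom.id _ := by
  apply PresentedGroup.ext
  intro i
  fin_cases i
  · show toFP d (PhiF d (fpa d)) = fpa d
    rw [PhiF_fpa]
    simp [toFP, aHom_one]
  · show toFP d (PhiF d (fpt d)) = fpt d
    rw [PhiF_fpt]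
    simp [toFP, conjGen]

lemma PhiF_comp_aHom : (PhiF d).comp (aHom d) = inr := by
  apply zmodHom_ext
  simp [aHom_one, PhiF_fpa]

lemma PhiF_comp_toFP : (PhiF d).comp (toFP d) = MonoidHom.id _ := by
  apply SemidirectProduct.hom_ext
  · apply FreeGroup.ext_hom
    intro j
    have hj := DFunLike.congr_fun (PhiF_comp_aHom d) (ofAdd j)
    simp only [MonoidHom.comp_apply] at hj ⊢
    simp only [toFP, SemidirectProduct.lift_inl, conjGen, FreeGroup.lift_apply_of]
    rw [_root_.map_mul (PhiF d), _root_.map_mul (PhiF d), _root_.map_inv (PhiF d), hj, PhiF_fpt, ← _root_.map_inv inr, ← inl_aut, shiftA_of]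
    simp
  · apply zmodHom_ext
    simp [toFP, aHom_one, PhiF_fpa]

def PhiE : FP d ≃* Gd d :=
  MonoidHom.toMulEquiv (PhiF d) (toFP d) (toFP_comp_PhiF d) (PhiF_comp_toFP d)

def piHom : FP d →* Multiplicative (ZMod d × ℤ) :=
  PresentedGroup.toGroup
    (f := fun i : Fin 2 => if i = 0 then ofAdd ((1 : ZMod d), (0:ℤ)) else ofAdd ((0 : ZMod d), (1:ℤ)))
    (by
      intro r hr
      rw [Set.mem_singleton_iff.mp hr, map_zpow]
      have h1 : (FreeGroup.lift fun i : Fin 2 =>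
          if i = 0 then ofAdd ((1 : ZMod d), (0:ℤ)) else ofAdd ((0 : ZMod d), (1:ℤ)))
          (FreeGroup.of 0) = ofAdd ((1 : ZMod d), (0:ℤ)) := by simp
      rw [h1, ← ofAdd_zsmul]
      have h2 : (d:ℤ) • ((1 : ZMod d), (0:ℤ)) = ((0 : ZMod d), (0:ℤ)) := by
        ext
        · show (d:ℤ) • (1 : ZMod d) = 0
          simp [zsmul_eq_mul]
        · show (d:ℤ) • (0:ℤ) = 0
          simp
      rw [h2]
      rfl)

lemma pi_fpa : piHom d (fpa d) = ofAdd ((1 : ZMod d), (0:ℤ)) := by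
  simp [piHom, fpa, PresentedGroup.toGroup.of]

lemma pi_fpt : piHom d (fpt d) = ofAdd ((0 : ZMod d), (1:ℤ)) := by
  simp [piHom, fpt, PresentedGroup.toGroup.of]

lemma pi_surjective [NeZero d] : Function.Surjective (piHom d) := by
  intro y
  refine ⟨fpa d ^ ((y.toAdd.1.val : ℤ)) * fpt d ^ y.toAdd.2, ?_⟩
  rw [_root_.map_mul, map_zpow, map_zpow, pi_fpa, pi_fpt, ← ofAdd_zsmul, ← ofAdd_zsmul,
    ← ofAdd_add]
  have : (y.toAdd.1.val : ℤ) • ((1 : ZMod d), (0:ℤ)) + y.toAdd.2 • ((0 : ZMod d), (1:ℤ))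
      = y.toAdd := by
    ext
    · show (y.toAdd.1.val : ℤ) • (1 : ZMod d) + y.toAdd.2 • (0 : ZMod d) = y.toAdd.1
      simp [zsmul_eq_mul, ZMod.natCast_val, ZMod.intCast_cast, ZMod.cast_id]
    · show (y.toAdd.1.val : ℤ) • (0:ℤ) + y.toAdd.2 • (1:ℤ) = y.toAdd.2
      simp
  rw [this]
  rfl

def ellHom : FreeGroup (ZMod d) →* Multiplicative ℤ :=
  FreeGroup.lift fun _ => ofAdd (1:ℤ)

def j2Hom : Multiplicative ℤ →* Multiplicative (ZMod d × ℤ) :=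
  AddMonoidHom.toMultiplicative (AddMonoidHom.inr (ZMod d) ℤ)

def q2Hom : Multiplicative (ZMod d) →* Multiplicative (ZMod d × ℤ) :=
  AddMonoidHom.toMultiplicative (AddMonoidHom.inl (ZMod d) ℤ)

def qHom : Gd d →* Multiplicative (ZMod d × ℤ) :=
  SemidirectProduct.lift ((j2Hom d).comp (ellHom d)) (q2Hom d) (by
    intro g
    apply FreeGroup.ext_hom
    intro j
    simp only [MonoidHom.comp_apply, MulEquiv.coe_toMonoidHom, shiftA_of, ellHom,
      FreeGroup.lift_apply_of, MulAut.conj_apply]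
    rw [mul_comm (q2Hom d g), mul_assoc, mul_inv_cancel, mul_one])

lemma pi_comp_toFP : (piHom d).comp (toFP d) = qHom d := by
  apply SemidirectProduct.hom_ext
  · apply FreeGroup.ext_hom
    intro j
    simp only [MonoidHom.comp_apply]
    rw [show (toFP d) (inl (of j)) = conjGen d (of j) from SemidirectProduct.lift_inl _ _ _ _]
    simp only [conjGen, FreeGroup.lift_apply_of]
    rw [_root_.map_mul (piHom d), _root_.map_mul (piHom d), _root_.map_inv (piHom d), pi_fpt]
    rw [mul_comm _ (ofAdd ((0 : ZMod d), (1:ℤ))), mul_assoc, mul_inv_cancel, mul_one]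
    rw [show (qHom d) (inl (of j)) = ((j2Hom d).comp (ellHom d)) (of j)
      from SemidirectProduct.lift_inl _ _ _ _]
    simp [ellHom, j2Hom]
  · rw [show (qHom d).comp inr = q2Hom d from SemidirectProduct.lift_comp_inr _ _ _]
    apply zmodHom_ext
    simp only [MonoidHom.comp_apply]
    rw [show (toFP d) (inr (ofAdd (1 : ZMod d))) = aHom d (ofAdd 1)
      from SemidirectProduct.lift_inr _ _ _ _, aHom_one, pi_fpa]
    simp [q2Hom]

lemma pi_eq_q_phi (x : FP d) : piHom d x = qHom d (PhiF d x) := by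
  conv_lhs => rw [show x = toFP d (PhiF d x) from (DFunLike.congr_fun (toFP_comp_PhiF d) x).symm]
  exact DFunLike.congr_fun (pi_comp_toFP d) (PhiF d x)

def shiftZ : Multiplicative ℤ →* MulAut (FreeGroup (ℤ × Idx d)) :=
  MonoidHom.mk' (fun n => freeGroupCongr (Equiv.prodCongr (Equiv.addLeft n.toAdd) (Equiv.refl _)))
    (fun g h => by
      apply MulEquiv.toMonoidHom_injective
      apply FreeGroup.ext_hom
      intro p
      obtain ⟨k, t⟩ := p
      simp [add_assoc])

abbrev Hd := FreeGroup (ℤ × Idx d) ⋊[shiftZ d] Multiplicative ℤ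

lemma shiftZ_of (n : Multiplicative ℤ) (p : ℤ × Idx d) :
    (shiftZ d n) (FreeGroup.of p) = FreeGroup.of (n.toAdd + p.1, p.2) := by
  obtain ⟨k, t⟩ := p
  simp [shiftZ]

def toI [NeZero d] (j : ZMod d) (h : j ≠ 0) : Idx d :=
  ⟨(d : ℤ) - j.val, by
    have h1 : j.val < d := ZMod.val_lt j
    have h2 : j.val ≠ 0 := fun hh => h ((ZMod.val_eq_zero j).mp hh)
    omega⟩

def toZ (s : Idx d) : ZMod d := ((-s.1 : ℤ) : ZMod d)

lemma toZ_ne_zero [NeZero d] (s : Idx d) : toZ d s ≠ 0 := by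
  intro h
  have h2 := (ZMod.intCast_zmod_eq_zero_iff_dvd _ _).mp h
  rw [dvd_neg] at h2
  have hs1 := s.2.1
  have hs2 := s.2.2
  have h3 := Int.le_of_dvd (by omega) h2
  omega

lemma toZ_toI [NeZero d] (j : ZMod d) (h : j ≠ 0) : toZ d (toI d j h) = j := by
  unfold toZ toI
  push_cast
  simp [ZMod.natCast_self, ZMod.natCast_val, ZMod.cast_id]

lemma val_toZ [NeZero d] (s : Idx d) : ((toZ d s).val : ℤ) = (d : ℤ) - s.1 := by
  unfold toZ
  have h1 : ((-s.1 : ℤ) : ZMod d) = ((((d : ℤ) - s.1).toNat : ℕ) : ZMod d) := by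
    have : ((((d : ℤ) - s.1).toNat : ℕ) : ℤ) = (d : ℤ) - s.1 := by
      rw [Int.toNat_of_nonneg]
      have := s.2.2
      omega
    rw [← Int.cast_natCast (R := ZMod d), this]
    push_cast
    simp [ZMod.natCast_self]
  rw [h1, ZMod.val_cast_of_lt]
  · have := s.2.1
    omega
  · have := s.2.1
    omega

lemma toI_toZ [NeZero d] (s : Idx d) (h : toZ d s ≠ 0) : toI d (toZ d s) h = s := by
  apply Subtype.ext
  show (d : ℤ) - ((toZ d s).val : ℤ) = s.1
  rw [val_toZ]
  ring

def lamGen [NeZero d] (j : ZMod d) : Hd d :=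
  if h : j = 0 then inr (ofAdd 1) else inl (.of ((0:ℤ), toI d j h)) * inr (ofAdd 1)

def lam [NeZero d] : FreeGroup (ZMod d) →* Hd d := FreeGroup.lift (lamGen d)

def schGen : FreeGroup (ℤ × Idx d) →* FreeGroup (ZMod d) :=
  FreeGroup.lift fun p =>
    (FreeGroup.of (0 : ZMod d)) ^ p.1 * FreeGroup.of (toZ d p.2) * (FreeGroup.of (0 : ZMod d)) ^ (-p.1 - 1)

def toFree : Hd d →* FreeGroup (ZMod d) :=
  SemidirectProduct.lift (schGen d) ((zpowersHom _) (FreeGroup.of (0 : ZMod d))) (by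
    intro g
    apply FreeGroup.ext_hom
    intro p
    simp only [MonoidHom.comp_apply, MulEquiv.coe_toMonoidHom, shiftZ_of, schGen,
      FreeGroup.lift_apply_of, MulAut.conj_apply, zpowersHom_apply]
    rw [zpow_add, show -(g.toAdd + p.1) - 1 = (-p.1 - 1) + (-g.toAdd) by ring, zpow_add]
    group)

lemma toFree_comp_lam [NeZero d] : (toFree d).comp (lam d) = MonoidHom.id _ := by
  apply FreeGroup.ext_hom
  intro j
  simp only [MonoidHom.comp_apply, MonoidHom.id_apply, lam, FreeGroup.lift_apply_of, lamGen]
  split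
  · rename_i h
    subst h
    simp [toFree, zpowersHom_apply]
  · rename_i h
    rw [_root_.map_mul (toFree d),
      show (toFree d) (inl (.of ((0:ℤ), toI d j h))) = schGen d (.of ((0:ℤ), toI d j h))
        from SemidirectProduct.lift_inl _ _ _ _,
      show (toFree d) (inr (ofAdd 1)) = (FreeGroup.of (0 : ZMod d)) ^ (1:ℤ)
        from SemidirectProduct.lift_inr _ _ _ _]
    simp only [schGen, FreeGroup.lift_apply_of, toZ_toI]
    group

lemma lam_of_zero [NeZero d] : lam d (.of (0 : ZMod d)) = inr (ofAdd 1) := by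
  simp [lam, lamGen]

lemma inr_mul_inl (g : Multiplicative ℤ) (n : FreeGroup (ℤ × Idx d)) :
    (inr g : Hd d) * inl n = inl ((shiftZ d g) n) * inr g := by
  rw [inl_aut, _root_.map_inv inr, inv_mul_cancel_right]

lemma lam_comp_toFree [NeZero d] : (lam d).comp (toFree d) = MonoidHom.id _ := by
  apply SemidirectProduct.hom_ext
  · apply FreeGroup.ext_hom
    intro p
    simp only [MonoidHom.comp_apply, MonoidHom.id_apply]
    rw [show (toFree d) (inl (.of p)) = schGen d (.of p) from SemidirectProduct.lift_inl _ _ _ _]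
    simp only [schGen, FreeGroup.lift_apply_of]
    rw [_root_.map_mul (lam d), _root_.map_mul (lam d), map_zpow, map_zpow, lam_of_zero]
    have hz := toZ_ne_zero d p.2
    rw [show lam d (.of (toZ d p.2)) = lamGen d (toZ d p.2) from FreeGroup.lift_apply_of,
      lamGen, dif_neg hz, toI_toZ]
    rw [← _root_.map_zpow (inr (φ := shiftZ d)), ← _root_.map_zpow (inr (φ := shiftZ d))]
    have hgoal : (ofAdd (1:ℤ)) ^ p.1 * (ofAdd (1:ℤ) * (ofAdd (1:ℤ)) ^ (-p.1 - 1)) = 1 := by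
      rw [← ofAdd_zsmul, ← ofAdd_zsmul, ← ofAdd_add, ← ofAdd_add]
      norm_num
    rw [show (inr ((ofAdd (1:ℤ)) ^ p.1) : Hd d) * (inl (FreeGroup.of ((0:ℤ), p.2)) *
          inr (ofAdd (1:ℤ))) * inr ((ofAdd (1:ℤ)) ^ (-p.1 - 1)) =
        inr ((ofAdd (1:ℤ)) ^ p.1) * inl (FreeGroup.of ((0:ℤ), p.2)) *
          (inr (ofAdd (1:ℤ)) * inr ((ofAdd (1:ℤ)) ^ (-p.1 - 1))) by group,
      ← _root_.map_mul (inr (φ := shiftZ d)), inr_mul_inl, mul_assoc,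
      ← _root_.map_mul (inr (φ := shiftZ d)), hgoal, _root_.map_one inr, mul_one, shiftZ_of]
    simp
  · apply MonoidHom.ext_mint
    simp only [MonoidHom.comp_apply, MonoidHom.id_apply]
    rw [show (toFree d) (inr (ofAdd 1)) = (FreeGroup.of (0 : ZMod d)) ^ ((ofAdd (1:ℤ)).toAdd)
      from SemidirectProduct.lift_inr _ _ _ _]
    simp [lam_of_zero]

lemma ell_comp_toFree : (ellHom d).comp (toFree d) = rightHom := by
  apply SemidirectProduct.hom_ext
  · apply FreeGroup.ext_hom
    intro p
    simp only [MonoidHom.comp_apply]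
    rw [show (toFree d) (inl (.of p)) = schGen d (.of p) from SemidirectProduct.lift_inl _ _ _ _]
    simp only [schGen, FreeGroup.lift_apply_of]
    rw [_root_.map_mul (ellHom d), _root_.map_mul (ellHom d), map_zpow, map_zpow]
    simp only [ellHom, FreeGroup.lift_apply_of]
    rw [← ofAdd_zsmul, ← ofAdd_zsmul, ← ofAdd_add, ← ofAdd_add]
    norm_num
  · apply MonoidHom.ext_mint
    simp only [MonoidHom.comp_apply]
    rw [show (toFree d) (inr (ofAdd 1)) = (FreeGroup.of (0 : ZMod d)) ^ ((ofAdd (1:ℤ)).toAdd)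
      from SemidirectProduct.lift_inr _ _ _ _]
    simp [ellHom]

def Pw (s : Idx d) : ℕ → FreeGroup (ℤ × Idx d)
  | 0 => 1
  | n+1 => .of (-(n+1 : ℤ), s) * Pw s n

def Qw (s : Idx d) : ℕ → FreeGroup (ℤ × Idx d)
  | 0 => 1
  | n+1 => Qw s n * .of ((n : ℤ), s)

def Wd (k : ℤ) (s : Idx d) : FreeGroup (ℤ × Idx d) :=
  if k < 0 then (Qw d s (-k).toNat)⁻¹ else Pw d s k.toNat

lemma Wd_zero (s : Idx d) : Wd d 0 s = 1 := by
  simp [Wd, Pw]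

lemma Wd_natCast (s : Idx d) (n : ℕ) : Wd d (n : ℤ) s = Pw d s n := by
  simp [Wd]

lemma Wd_neg_natCast (s : Idx d) (n : ℕ) : Wd d (-(n : ℤ)) s = (Qw d s n)⁻¹ := by
  rcases Nat.eq_zero_or_pos n with h | h
  · subst h
    simp [Wd, Pw, Qw]
  · have : -(n:ℤ) < 0 := by omega
    simp only [Wd, if_pos this]
    have h2 : (-(-(n:ℤ))).toNat = n := by omega
    rw [h2]

def nuHom : FreeGroup (Gen d) →* FreeGroup (ℤ × Idx d) :=
  FreeGroup.lift fun p => Wd d p.1.1 p.2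

def Es (s : Idx d) (k : ℤ) : FreeGroup (Gen d) :=
  if h : k = 0 then 1 else .of (⟨k, h⟩, s)

def nu'Hom : FreeGroup (ℤ × Idx d) →* FreeGroup (Gen d) :=
  FreeGroup.lift fun p => Es d p.2 (-p.1) * (Es d p.2 (-p.1 - 1))⁻¹

lemma nu_Es (s : Idx d) (k : ℤ) : nuHom d (Es d s k) = Wd d k s := by
  unfold Es
  split
  · rename_i h
    subst h
    rw [_root_.map_one, Wd_zero]
  · exact FreeGroup.lift_apply_of

lemma key2 (m : ℤ) (s : Idx d) : Wd d (-m) s * (Wd d (-m - 1) s)⁻¹ = .of (m, s) := by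
  obtain ⟨n, rfl | rfl⟩ := m.eq_nat_or_neg
  · rw [Wd_neg_natCast, show -(n:ℤ) - 1 = -(((n+1 : ℕ)):ℤ) by push_cast; ring, Wd_neg_natCast]
    rw [inv_inv, show Qw d s (n+1) = Qw d s n * .of ((n:ℤ), s) from rfl]
    group
  · rcases Nat.eq_zero_or_pos n with h | h
    · subst h
      norm_num
      rw [Wd_zero, show (-1 : ℤ) = -((1:ℕ):ℤ) by norm_num, Wd_neg_natCast]
      rw [inv_inv, show Qw d s 1 = Qw d s 0 * .of (((0:ℕ):ℤ), s) from rfl]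
      simp [Qw]
    · obtain ⟨n', rfl⟩ : ∃ n', n = n' + 1 := ⟨n - 1, by omega⟩
      rw [neg_neg, show ((n'+1:ℕ):ℤ) = ((n'+1 : ℕ) : ℤ) from rfl, Wd_natCast,
        show (((n'+1:ℕ)):ℤ) - 1 = ((n' : ℕ) : ℤ) by push_cast; ring, Wd_natCast]
      rw [show Pw d s (n'+1) = .of (-((n':ℤ)+1), s) * Pw d s n' from rfl]
      have : (-(((n':ℕ):ℤ)+1), s) = (-((n'+1:ℕ):ℤ), s) := by push_cast; ring_nf
      rw [this]
      group

lemma nu'_Pw (s : Idx d) (n : ℕ) : nu'Hom d (Pw d s n) = Es d s n := by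
  induction n with
  | zero => simp [Pw, Es]
  | succ n ih =>
    rw [show Pw d s (n+1) = .of (-(n+1 : ℤ), s) * Pw d s n from rfl, _root_.map_mul, ih,
      show nu'Hom d (.of (-(n+1 : ℤ), s)) = Es d s (-(-(n+1:ℤ))) * (Es d s (-(-(n+1:ℤ)) - 1))⁻¹
        from FreeGroup.lift_apply_of]
    rw [show -(-(n+1:ℤ)) = ((n+1:ℕ):ℤ) by push_cast; ring,
      show ((n+1:ℕ):ℤ) - 1 = ((n:ℕ):ℤ) by push_cast; ring]
    group

lemma nu'_Qw (s : Idx d) (n : ℕ) : nu'Hom d (Qw d s n) = (Es d s (-(n:ℤ)))⁻¹ := by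
  induction n with
  | zero => simp [Qw, Es]
  | succ n ih =>
    rw [show Qw d s (n+1) = Qw d s n * .of ((n : ℤ), s) from rfl, _root_.map_mul, ih,
      show nu'Hom d (.of ((n:ℤ), s)) = Es d s (-(n:ℤ)) * (Es d s (-(n:ℤ) - 1))⁻¹
        from FreeGroup.lift_apply_of]
    rw [show -(n:ℤ) - 1 = -((n+1:ℕ):ℤ) by push_cast; ring]
    group

lemma nu'_comp_nu : (nu'Hom d).comp (nuHom d) = MonoidHom.id _ := by
  apply FreeGroup.ext_hom
  intro p
  obtain ⟨⟨k, hk⟩, s⟩ := p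
  simp only [MonoidHom.comp_apply, MonoidHom.id_apply, nuHom, FreeGroup.lift_apply_of]
  obtain ⟨n, rfl | rfl⟩ := k.eq_nat_or_neg
  · rw [Wd_natCast, nu'_Pw, Es, dif_neg hk]
  · rw [Wd_neg_natCast, _root_.map_inv, nu'_Qw, inv_inv, Es, dif_neg hk]

lemma nu_comp_nu' : (nuHom d).comp (nu'Hom d) = MonoidHom.id _ := by
  apply FreeGroup.ext_hom
  intro p
  simp only [MonoidHom.comp_apply, MonoidHom.id_apply, nu'Hom, FreeGroup.lift_apply_of]
  rw [_root_.map_mul, _root_.map_inv, nu_Es, nu_Es, key2]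

def Bel (s : Idx d) : FP d := fpa d ^ (-(s.1)) * fpt d * (fpa d ^ (-(s.1)))⁻¹

lemma conjGen_x0 : conjGen d (.of (0 : ZMod d)) = fpt d := by
  simp [conjGen]

lemma mHom_of (m : ℤ) (s : Idx d) :
    conjGen d (schGen d (.of (m, s))) = fpt d ^ m * Bel d s * fpt d ^ (-m - 1) := by
  simp only [schGen, FreeGroup.lift_apply_of]
  rw [_root_.map_mul, _root_.map_mul, map_zpow, map_zpow, conjGen_x0]
  congr 1
  congr 1
  simp only [conjGen, FreeGroup.lift_apply_of, toZ, aHom_intCast, Bel]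

lemma mHom_Pw (s : Idx d) (n : ℕ) :
    conjGen d (schGen d (Pw d s n)) = fpt d ^ (-(n:ℤ)) * (Bel d s) ^ n := by
  induction n with
  | zero => simp [Pw]
  | succ n ih =>
    rw [show Pw d s (n+1) = .of (-(n+1 : ℤ), s) * Pw d s n from rfl, _root_.map_mul,
      _root_.map_mul, ih, mHom_of]
    rw [show (-(-(n+1:ℤ)) - 1) = (n:ℤ) by ring, pow_succ']
    push_cast
    group

lemma mHom_Qw (s : Idx d) (n : ℕ) :
    conjGen d (schGen d (Qw d s n)) = (Bel d s) ^ n * fpt d ^ (-(n:ℤ)) := by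
  induction n with
  | zero => simp [Qw]
  | succ n ih =>
    rw [show Qw d s (n+1) = Qw d s n * .of ((n : ℤ), s) from rfl, _root_.map_mul,
      _root_.map_mul, ih, mHom_of, pow_succ]
    push_cast
    group

lemma mHom_Wd (k : ℤ) (s : Idx d) :
    conjGen d (schGen d (Wd d k s)) =
      (fpt d ^ k)⁻¹ * (fpa d ^ s.1)⁻¹ * fpt d ^ k * fpa d ^ s.1 := by
  obtain ⟨n, rfl | rfl⟩ := k.eq_nat_or_neg
  · rw [Wd_natCast, mHom_Pw, Bel, conj_pow, ← zpow_natCast (fpt d) n]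
    group
  · rw [Wd_neg_natCast, _root_.map_inv, _root_.map_inv, mHom_Qw, Bel, conj_pow,
      ← zpow_natCast (fpt d) n]
    group

def theta [NeZero d] : FreeGroup (Gen d) →* FP d :=
  (toFP d).comp ((inl (φ := shiftA d)).comp ((toFree d).comp
    ((inl (φ := shiftZ d)).comp (nuHom d))))

lemma theta_of [NeZero d] (p : Gen d) :
    theta d (.of p) =
      (fpt d ^ p.1.1)⁻¹ * (fpa d ^ p.2.1)⁻¹ * fpt d ^ p.1.1 * fpa d ^ p.2.1 := by
  show toFP d (inl (toFree d (inl (nuHom d (.of p))))) = _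
  rw [show nuHom d (.of p) = Wd d p.1.1 p.2 from FreeGroup.lift_apply_of,
    show toFree d (inl (Wd d p.1.1 p.2)) = schGen d (Wd d p.1.1 p.2)
      from SemidirectProduct.lift_inl _ _ _ _,
    show toFP d (inl (schGen d (Wd d p.1.1 p.2))) = conjGen d (schGen d (Wd d p.1.1 p.2))
      from SemidirectProduct.lift_inl _ _ _ _,
    mHom_Wd]

lemma theta_injective [NeZero d] : Function.Injective (theta d) := by
  have h1 : Function.Injective (toFP d) :=
    Function.LeftInverse.injective (g := PhiF d)
      (fun x => DFunLike.congr_fun (PhiF_comp_toFP d) x)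
  have h2 : Function.Injective (toFree d) :=
    Function.LeftInverse.injective (g := lam d)
      (fun x => DFunLike.congr_fun (lam_comp_toFree d) x)
  have h3 : Function.Injective (nuHom d) :=
    Function.LeftInverse.injective (g := nu'Hom d)
      (fun x => DFunLike.congr_fun (nu'_comp_nu d) x)
  exact h1.comp (inl_injective.comp (h2.comp (inl_injective.comp h3)))

lemma toFree_lam_pt [NeZero d] (w : FreeGroup (ZMod d)) : toFree d (lam d w) = w := by
  simpa using DFunLike.congr_fun (toFree_comp_lam d) w

lemma toFP_PhiF_pt (x : FP d) : toFP d (PhiF d x) = x := by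
  simpa using DFunLike.congr_fun (toFP_comp_PhiF d) x

lemma PhiF_toFP_pt (y : Gd d) : PhiF d (toFP d y) = y := by
  simpa using DFunLike.congr_fun (PhiF_comp_toFP d) y

lemma nu_nu'_pt (u : FreeGroup (ℤ × Idx d)) : nuHom d (nu'Hom d u) = u := by
  simpa using DFunLike.congr_fun (nu_comp_nu' d) u

lemma ell_toFree_pt (y : Hd d) : ellHom d (toFree d y) = rightHom y := by
  simpa using DFunLike.congr_fun (ell_comp_toFree d) y

lemma mem_ker_iff [NeZero d] (x : FP d) :
    x ∈ (piHom d).ker ↔ ∃ v, theta d v = x := by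
  constructor
  · intro hx
    rw [MonoidHom.mem_ker, pi_eq_q_phi] at hx
    set g := PhiF d x with hg
    rw [show g = inl g.left * inr g.right from (inl_left_mul_inr_right g).symm,
      _root_.map_mul] at hx
    rw [show (qHom d) (inl g.left) = ((j2Hom d).comp (ellHom d)) g.left
        from SemidirectProduct.lift_inl _ _ _ _,
      show (qHom d) (inr g.right) = q2Hom d g.right
        from SemidirectProduct.lift_inr _ _ _ _] at hx
    have hadd := congrArg Multiplicative.toAdd hx
    simp only [toAdd_mul, toAdd_one] at hadd
    have hj2 : Multiplicative.toAdd (((j2Hom d).comp (ellHom d)) g.left)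
        = ((0 : ZMod d), Multiplicative.toAdd (ellHom d g.left)) := rfl
    have hq2 : Multiplicative.toAdd ((q2Hom d) g.right)
        = (Multiplicative.toAdd g.right, (0:ℤ)) := rfl
    rw [hj2, hq2] at hadd
    have hr : g.right = 1 := by
      have h1 := congrArg Prod.fst hadd
      simpa using h1
    have hl : ellHom d g.left = 1 := by
      have h1 := congrArg Prod.snd hadd
      simpa using h1
    have hw : rightHom (lam d g.left) = 1 := by
      have h5 := ell_toFree_pt d (lam d g.left)
      rw [toFree_lam_pt] at h5
      rw [← h5, hl]
    have hh : lam d g.left = inl (lam d g.left).left := by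
      ext
      · simp
      · simpa using hw
    refine ⟨nu'Hom d (lam d g.left).left, ?_⟩
    show toFP d (inl (toFree d (inl (nuHom d (nu'Hom d (lam d g.left).left))))) = x
    rw [nu_nu'_pt, ← hh, toFree_lam_pt]
    have hx2 : toFP d g = x := toFP_PhiF_pt d x
    rw [← hx2, show g = inl g.left * inr g.right from (inl_left_mul_inr_right g).symm, hr]
    simp
  · rintro ⟨v, rfl⟩
    rw [MonoidHom.mem_ker, pi_eq_q_phi]
    show qHom d (PhiF d (toFP d (inl (toFree d (inl (nuHom d v)))))) = 1
    rw [PhiF_toFP_pt]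
    rw [show (qHom d) (inl (toFree d (inl (nuHom d v))))
        = ((j2Hom d).comp (ellHom d)) (toFree d (inl (nuHom d v)))
        from SemidirectProduct.lift_inl _ _ _ _]
    simp only [MonoidHom.comp_apply]
    rw [ell_toFree_pt]
    simp

end CF


/-- The kernel `D` of the natural surjection `ℤ/dℤ * ℤ → ℤ/dℤ × ℤ` (the Cartesian
subgroup of the free product `⟨a, t ∣ a^d = 1⟩`) is a free group, freely generated by
the commutators `[t^k, a^s] = t^(-k) a^(-s) t^k a^s` for `k ∈ ℤ \ {0}` and
`1 ≤ s ≤ d - 1`. -/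
theorem cartesian_subgroup_free (d : ℕ) (hd : 2 ≤ d) :
    ∃ π : FP d →* Multiplicative (ZMod d × ℤ),
      π (fpa d) = Multiplicative.ofAdd (1, 0) ∧
      π (fpt d) = Multiplicative.ofAdd (0, 1) ∧
      Function.Surjective π ∧
      ∃ e : FreeGroup ({k : ℤ // k ≠ 0} × {s : ℤ // 1 ≤ s ∧ s ≤ (d : ℤ) - 1}) ≃*
          MonoidHom.ker π,
        ∀ (k : {k : ℤ // k ≠ 0}) (s : {s : ℤ // 1 ≤ s ∧ s ≤ (d : ℤ) - 1}),
          (↑(e (FreeGroup.of (k, s))) : FP d) =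
            (fpt d ^ (k : ℤ))⁻¹ * (fpa d ^ (s : ℤ))⁻¹ * fpt d ^ (k : ℤ) * fpa d ^ (s : ℤ) := by
  haveI : NeZero d := ⟨by omega⟩
  refine ⟨CF.piHom d, CF.pi_fpa d, CF.pi_fpt d, CF.pi_surjective d, ?_⟩
  have hmem : ∀ v, CF.theta d v ∈ (CF.piHom d).ker := fun v => (CF.mem_ker_iff d _).mpr ⟨v, rfl⟩
  refine ⟨MulEquiv.ofBijective ((CF.theta d).codRestrict (CF.piHom d).ker hmem) ⟨?_, ?_⟩, ?_⟩
  · intro a b hab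
    apply CF.theta_injective d
    exact congrArg Subtype.val hab
  · rintro ⟨x, hx⟩
    obtain ⟨v, hv⟩ := (CF.mem_ker_iff d x).mp hx
    exact ⟨v, Subtype.ext hv⟩
  · intro k s
    show CF.theta d (FreeGroup.of (k, s)) = _
    rw [CF.theta_of]
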